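/- arXiv:2006.10150 — 2 statements merged into one kernel-verified Lean document; each statement's English description precedes it below -/
import Mathlib

section
/- Let v, w ∈ ℝⁿ with sup norms bounded by π/(8√n · r) for some r > 0 (n ≥ 2). Suppose that for every unit coordinate direction eₖ and every small ε > 0 one has cos(2ε⟪eₖ, v⟫) = cos(2ε⟪eₖ, w⟫), and similarly cos(2ε⟪eₖ + e_l, v⟫) = cos(2ε⟪eₖ + e_l, w⟫) for all k ≠ l. Then v = w or v = −w. -/
open scoped RealInnerProductSpace

lemma abs_eq_of_cos_small (a b : ℝ)
    (h : ∃ ε₀ > 0, ∀ ε : ℝ, 0 < ε → ε < ε₀ → Real.cos (2 * ε * a) = Real.cos (2 * ε * b)) :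
    |a| = |b| := by
  obtain ⟨ε₀, hε₀, h⟩ := h
  set M : ℝ := max |a| |b| + 1 with hMdef
  have hM : 0 < M := by positivity
  set ε : ℝ := min (ε₀ / 2) (1 / (4 * M)) with hεdef
  have hεpos : 0 < ε := lt_min (by linarith) (by positivity)
  have hεlt : ε < ε₀ := lt_of_le_of_lt (min_le_left _ _) (by linarith)
  have key : Real.cos (2 * ε * a) = Real.cos (2 * ε * b) := h ε hεpos hεlt
  have hb1 : 2 * ε * |a| ≤ Real.pi := by
    have h1 : |a| ≤ M := by simp [hMdef]; nlinarith [le_max_left |a| |b|]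
    have h2 : ε ≤ 1 / (4 * M) := min_le_right _ _
    have : 2 * ε * |a| ≤ 2 * (1 / (4 * M)) * M := by
      apply mul_le_mul (by nlinarith) h1 (abs_nonneg a) (by positivity)
    have hpi : (1:ℝ) ≤ Real.pi := by linarith [Real.pi_gt_three]
    have : 2 * (1 / (4 * M)) * M = 1/2 := by field_simp; ring
    linarith
  have hb2 : 2 * ε * |b| ≤ Real.pi := by
    have h1 : |b| ≤ M := by simp [hMdef]; nlinarith [le_max_right |a| |b|]
    have h2 : ε ≤ 1 / (4 * M) := min_le_right _ _
    have : 2 * ε * |b| ≤ 2 * (1 / (4 * M)) * M := by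
      apply mul_le_mul (by nlinarith) h1 (abs_nonneg b) (by positivity)
    have hpi : (1:ℝ) ≤ Real.pi := by linarith [Real.pi_gt_three]
    have : 2 * (1 / (4 * M)) * M = 1/2 := by field_simp; ring
    linarith
  have h2ε : (0:ℝ) < 2 * ε := by linarith
  have hca : Real.cos (2 * ε * |a|) = Real.cos (2 * ε * b) := by
    rw [show 2 * ε * |a| = |2 * ε * a| by rw [abs_mul, abs_of_pos h2ε],
      Real.cos_abs]; exact key
  have hcb : Real.cos (2 * ε * |b|) = Real.cos (2 * ε * b) := by
    rw [show 2 * ε * |b| = |2 * ε * b| by rw [abs_mul, abs_of_pos h2ε],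
      Real.cos_abs]
  have := Real.injOn_cos ⟨by positivity, hb1⟩ ⟨by positivity, hb2⟩ (hca.trans hcb.symm)
  exact mul_left_cancel₀ (ne_of_gt h2ε) this

/-- Equality of cosines along coordinate and mixed directions for all small `ε`
determines a vector up to a global sign. -/
theorem stmt_8 (n : ℕ) (hn : 2 ≤ n) (r : ℝ) (hr : 0 < r)
    (v w : EuclideanSpace ℝ (Fin n))
    (hv : ∀ k : Fin n, |v k| ≤ Real.pi / (8 * Real.sqrt n * r))
    (hw : ∀ k : Fin n, |w k| ≤ Real.pi / (8 * Real.sqrt n * r))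
    (hcoord : ∀ k : Fin n, ∃ ε₀ > 0, ∀ ε : ℝ, 0 < ε → ε < ε₀ →
      Real.cos (2 * ε * ⟪(EuclideanSpace.single k (1 : ℝ)), v⟫) =
        Real.cos (2 * ε * ⟪(EuclideanSpace.single k (1 : ℝ)), w⟫))
    (hmix : ∀ k l : Fin n, k ≠ l → ∃ ε₀ > 0, ∀ ε : ℝ, 0 < ε → ε < ε₀ →
      Real.cos (2 * ε * ⟪(EuclideanSpace.single k (1 : ℝ) +
          EuclideanSpace.single l (1 : ℝ)), v⟫) =
        Real.cos (2 * ε * ⟪(EuclideanSpace.single k (1 : ℝ) +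
          EuclideanSpace.single l (1 : ℝ)), w⟫)) :
    v = w ∨ v = -w := by
  have hinner : ∀ (k : Fin n) (u : EuclideanSpace ℝ (Fin n)),
      ⟪(EuclideanSpace.single k (1 : ℝ)), u⟫ = u k := by
    intro k u
    rw [EuclideanSpace.inner_single_left]
    simp
  have habs : ∀ k : Fin n, |v k| = |w k| := by
    intro k
    have := hcoord k
    simp only [hinner] at this
    exact abs_eq_of_cos_small _ _ this
  have habs2 : ∀ k l : Fin n, k ≠ l → |v k + v l| = |w k + w l| := by
    intro k l hkl
    have := hmix k l hkl
    simp only [inner_add_left, hinner] at this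
    exact abs_eq_of_cos_small _ _ this
  have hsign : ∀ k : Fin n, v k = w k ∨ v k = -w k := by
    intro k; exact abs_eq_abs.mp (habs k)
  by_cases hall : ∀ k, v k = w k
  · left; ext k; exact hall k
  · right
    push_neg at hall
    obtain ⟨k, hk⟩ := hall
    have hvk : v k = -w k := (hsign k).resolve_left hk
    have hwk : w k ≠ 0 := by intro h; apply hk; rw [hvk, h]; simp
    ext l
    rcases hsign l with hl | hl
    · by_cases hwl : w l = 0
      · simp [hl, hwl]
      · have hkl : k ≠ l := by
          intro h; subst h; apply hk; exact hl
        have := habs2 k l hkl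
        rw [hvk, hl] at this
        have hsq := sq_abs (-w k + w l) ▸ sq_abs (w k + w l) ▸ congrArg (· ^ 2) this
        have : w k * w l = 0 := by nlinarith [sq_abs (-w k + w l), sq_abs (w k + w l)]
        rcases mul_eq_zero.mp this with h | h
        · exact absurd h hwk
        · exact absurd h hwl
    · simpa using hl
end

section
/- Let A₁, A₂ : ℝⁿ → ℝⁿ be continuous on an open set Ω ⊂ ℝⁿ with ‖A_j‖_∞ ≤ π/(8√n·r), Ω ⊂ B_r(0), n ≥ 2. If cos((x−y)·A₁((x+y)/2)) = cos((x−y)·A₂((x+y)/2)) for all x, y ∈ Ω with x ≠ y, then for every x₀ ∈ Ω either A₁(x₀) = A₂(x₀) or A₁(x₀) = −A₂(x₀). -/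
open scoped RealInnerProductSpace

lemma aux_cos_abs_eq {s t : ℝ} (hs : |s| ≤ Real.pi) (ht : |t| ≤ Real.pi)
    (h : Real.cos s = Real.cos t) : |s| = |t| :=
  Real.injOn_cos ⟨abs_nonneg s, hs⟩ ⟨abs_nonneg t, ht⟩
    (by rwa [Real.cos_abs, Real.cos_abs])

lemma aux_sign_consistency {E : Type*} [NormedAddCommGroup E] [InnerProductSpace ℝ E]
    (a b : E) (h : ∀ v : E, |⟪v, a⟫| = |⟪v, b⟫|) : a = b ∨ a = -b := by
  have h2 : ∀ v : E, ⟪v, a - b⟫ * ⟪v, a + b⟫ = 0 := by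
    intro v
    have hsq : ⟪v, a⟫ ^ 2 = ⟪v, b⟫ ^ 2 := by
      rw [← sq_abs, ← sq_abs ⟪v, b⟫, h v]
    have hcalc : ⟪v, a - b⟫ * ⟪v, a + b⟫ = ⟪v, a⟫ ^ 2 - ⟪v, b⟫ ^ 2 := by
      rw [inner_sub_right, inner_add_right]; ring
    rw [hcalc, hsq]; ring
  by_cases hu : a - b = 0
  · left; exact sub_eq_zero.mp hu
  · right
    have huu : ⟪a - b, a - b⟫ ≠ 0 := fun hz => hu (inner_self_eq_zero.mp hz)
    have huw : ⟪a - b, a + b⟫ = 0 := by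
      rcases mul_eq_zero.mp (h2 (a - b)) with h1 | h1
      · exact absurd h1 huu
      · exact h1
    have hwu : ⟪a + b, a - b⟫ = 0 := by rw [real_inner_comm]; exact huw
    have hkey : (⟪a - b, a - b⟫ + ⟪a + b, a - b⟫) * (⟪a - b, a + b⟫ + ⟪a + b, a + b⟫) = 0 := by
      rw [← inner_add_left, ← inner_add_left]; exact h2 _
    rw [huw, hwu] at hkey
    have hww : ⟪a + b, a + b⟫ = 0 := by
      rcases mul_eq_zero.mp hkey with h1 | h1
      · exact absurd (by linarith : ⟪a - b, a - b⟫ = 0) huu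
      · linarith
    have : a + b = 0 := inner_self_eq_zero.mp hww
    exact eq_neg_of_add_eq_zero_left this

/-- Equality of the cosine kernels on `Ω × Ω` determines the magnetic potential
pointwise up to a sign. -/
theorem stmt_10 (n : ℕ) (hn : 2 ≤ n) (r : ℝ) (hr : 0 < r)
    (Ω : Set (EuclideanSpace ℝ (Fin n))) (hΩo : IsOpen Ω)
    (hΩr : Ω ⊆ Metric.ball (0 : EuclideanSpace ℝ (Fin n)) r)
    (A₁ A₂ : EuclideanSpace ℝ (Fin n) → EuclideanSpace ℝ (Fin n))
    (hA₁c : ContinuousOn A₁ Ω) (hA₂c : ContinuousOn A₂ Ω)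
    (hA₁ : ∀ z, ‖A₁ z‖ ≤ Real.pi / (8 * Real.sqrt n * r))
    (hA₂ : ∀ z, ‖A₂ z‖ ≤ Real.pi / (8 * Real.sqrt n * r))
    (h : ∀ x ∈ Ω, ∀ y ∈ Ω, x ≠ y →
      Real.cos ⟪x - y, A₁ ((2 : ℝ)⁻¹ • (x + y))⟫ =
        Real.cos ⟪x - y, A₂ ((2 : ℝ)⁻¹ • (x + y))⟫) :
    ∀ x₀ ∈ Ω, A₁ x₀ = A₂ x₀ ∨ A₁ x₀ = -A₂ x₀ := by
  intro x₀ hx₀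
  obtain ⟨δ, hδ, hball⟩ := Metric.isOpen_iff.mp hΩo x₀ hx₀
  apply aux_sign_consistency
  intro v
  by_cases hv : v = 0
  · simp [hv]
  have hvn : (0 : ℝ) < ‖v‖ := norm_pos_iff.mpr hv
  have hπ : (0 : ℝ) < Real.pi := Real.pi_pos
  set C : ℝ := ‖v‖ * (‖A₁ x₀‖ + ‖A₂ x₀‖ + 1) with hC
  have hCpos : 0 < C := by
    apply mul_pos hvn
    have := norm_nonneg (A₁ x₀); have := norm_nonneg (A₂ x₀); linarith
  set ε : ℝ := min (δ / (2 * ‖v‖)) (Real.pi / (2 * C)) with hε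
  have hεpos : 0 < ε := lt_min (by positivity) (by positivity)
  have hεδ : ε * ‖v‖ < δ := by
    have h1 : ε ≤ δ / (2 * ‖v‖) := min_le_left _ _
    have hq : δ / (2 * ‖v‖) * ‖v‖ = δ / 2 := by field_simp
    have h2 := mul_le_mul_of_nonneg_right h1 (le_of_lt hvn)
    linarith
  have hεC : 2 * ε * C ≤ Real.pi := by
    have h1 : ε ≤ Real.pi / (2 * C) := min_le_right _ _
    rw [le_div_iff₀ (by positivity)] at h1
    nlinarith
  set x : EuclideanSpace ℝ (Fin n) := x₀ + ε • v with hx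
  set y : EuclideanSpace ℝ (Fin n) := x₀ - ε • v with hy
  have hxΩ : x ∈ Ω := by
    apply hball
    rw [Metric.mem_ball, dist_eq_norm]
    have : x - x₀ = ε • v := by rw [hx]; abel
    rw [this, norm_smul]
    simpa [abs_of_pos hεpos] using hεδ
  have hyΩ : y ∈ Ω := by
    apply hball
    rw [Metric.mem_ball, dist_eq_norm]
    have : y - x₀ = (-ε) • v := by rw [hy]; module
    rw [this, norm_smul]
    simpa [abs_of_pos hεpos, abs_neg] using hεδ
  have hxy : x ≠ y := by
    intro hcon
    have : (2 * ε) • v = 0 := by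
      have : x - y = (2 * ε) • v := by rw [hx, hy]; module
      rw [← this, hcon, sub_self]
    rcases smul_eq_zero.mp this with h1 | h1
    · exact absurd h1 (by positivity)
    · exact hv h1
  have hmid : (2 : ℝ)⁻¹ • (x + y) = x₀ := by rw [hx, hy]; module
  have hdiff : x - y = (2 * ε) • v := by rw [hx, hy]; module
  have hcos := h x hxΩ y hyΩ hxy
  rw [hmid, hdiff, real_inner_smul_left, real_inner_smul_left] at hcos
  have hb1 : |2 * ε * ⟪v, A₁ x₀⟫| ≤ Real.pi := by
    rw [abs_mul, abs_of_pos (by positivity : (0:ℝ) < 2 * ε)]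
    have hcs : |⟪v, A₁ x₀⟫| ≤ ‖v‖ * ‖A₁ x₀‖ := abs_real_inner_le_norm v (A₁ x₀)
    have : ‖v‖ * ‖A₁ x₀‖ ≤ C := by
      rw [hC]
      have := norm_nonneg (A₂ x₀); nlinarith
    nlinarith
  have hb2 : |2 * ε * ⟪v, A₂ x₀⟫| ≤ Real.pi := by
    rw [abs_mul, abs_of_pos (by positivity : (0:ℝ) < 2 * ε)]
    have hcs : |⟪v, A₂ x₀⟫| ≤ ‖v‖ * ‖A₂ x₀‖ := abs_real_inner_le_norm v (A₂ x₀)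
    have : ‖v‖ * ‖A₂ x₀‖ ≤ C := by
      rw [hC]
      have := norm_nonneg (A₁ x₀); nlinarith
    nlinarith
  have habs := aux_cos_abs_eq hb1 hb2 hcos
  rw [abs_mul (2 * ε), abs_mul (2 * ε), abs_of_pos (by positivity : (0:ℝ) < 2 * ε)] at habs
  exact mul_left_cancel₀ (by positivity : (2 * ε : ℝ) ≠ 0) habs
end
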